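/- Let G be a finite simple graph and L a list assignment on G with |L(v)| ≥ 4 for every vertex v. Suppose S is a set of vertices of G such that every vertex of S has degree exactly 4 in G, and the induced subgraph G[S] is a cycle of even length. If the induced subgraph of G on V(G) \ S has a proper L-coloring, then G has a proper L-coloring. -/

import Mathlib

open SimpleGraph Finset
open Fin.NatCast Fin.CommRing

noncomputable def pickC (s : Finset ℕ) : ℕ := if h : s.Nonempty then s.min' h else 0

lemma pickC_mem {s : Finset ℕ} (h : s.Nonempty) : pickC s ∈ s := by
  rw [pickC, dif_pos h]; exact s.min'_mem h

noncomputable def greedyC {n : ℕ} [NeZero n] (ℓ : Fin n → Finset ℕ) (k : Fin n) (c : ℕ) : ℕ → ℕ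
  | 0 => c
  | p+1 => pickC ((ℓ (k+1+((p+1 : ℕ) : Fin n))).erase (greedyC ℓ k c p))

theorem cycle_two_choosable {n : ℕ} (hn : 4 ≤ n) (hev : 2 ∣ n)
    (ℓ : Fin n → Finset ℕ) (hc : ∀ i, 2 ≤ (ℓ i).card) :
    ∃ g : Fin n → ℕ, (∀ i, g i ∈ ℓ i) ∧ ∀ i j, (cycleGraph n).Adj i j → g i ≠ g j := by
  haveI : NeZero n := ⟨by omega⟩
  obtain ⟨ℓ', hsub, hcard⟩ : ∃ ℓ' : Fin n → Finset ℕ, (∀ i, ℓ' i ⊆ ℓ i) ∧ ∀ i, (ℓ' i).card = 2 := by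
    choose ℓ' h1 h2 using fun i => Finset.exists_subset_card_eq (hc i)
    exact ⟨ℓ', h1, h2⟩
  suffices h : ∃ g : Fin n → ℕ, (∀ i, g i ∈ ℓ' i) ∧ ∀ i j, (cycleGraph n).Adj i j → g i ≠ g j by
    obtain ⟨g, h1, h2⟩ := h; exact ⟨g, fun i => hsub i (h1 i), h2⟩
  have hone : ((1 : Fin n) : ℕ) = 1 := by rw [Fin.val_one']; exact Nat.mod_eq_of_lt (by omega)
  have hadd : ∀ x : Fin n, ((x + 1 : Fin n) : ℕ) = (x.val + 1) % n := by
    intro x; rw [Fin.val_add, hone]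
  have adjchar : ∀ i j : Fin n, (cycleGraph n).Adj i j → i = j + 1 ∨ j = i + 1 := by
    intro i j h
    rw [cycleGraph_adj'] at h
    rcases h with h | h
    · left
      have : i - j = 1 := Fin.ext (by rw [h, hone])
      rw [sub_eq_iff_eq_add] at this; rw [this]; ring
    · right
      have : j - i = 1 := Fin.ext (by rw [h, hone])
      rw [sub_eq_iff_eq_add] at this; rw [this]; ring
  by_cases hA : ∀ k : Fin n, ℓ' (k+1) = ℓ' k
  · -- all lists equal
    have hall : ∀ i : Fin n, ℓ' i = ℓ' 0 := by
      have key : ∀ p, ∀ hp : p < n, ℓ' ⟨p, hp⟩ = ℓ' 0 := by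
        intro p
        induction p with
        | zero =>
          intro hp
          have h0 : (⟨0, hp⟩ : Fin n) = 0 := Fin.ext (by simp)
          rw [h0]
        | succ p ih =>
          intro hp
          have hp' : p < n := by omega
          have he : (⟨p+1, hp⟩ : Fin n) = ⟨p, hp'⟩ + 1 := by
            apply Fin.ext; rw [hadd]; simp [Nat.mod_eq_of_lt hp]
          rw [he, hA]; exact ih hp'
      intro i; have := key i.val i.isLt; simpa using this
    obtain ⟨a, b, hab, h0⟩ := Finset.card_eq_two.mp (hcard 0)
    refine ⟨fun i => if i.val % 2 = 0 then a else b, ?_, ?_⟩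
    · intro i; rw [hall i, h0]; dsimp only; split <;> simp
    · intro i j hadj
      have hpar : i.val % 2 ≠ j.val % 2 := by
        obtain ⟨k, hk⟩ := hev
        rcases adjchar i j hadj with h | h
        · have := hadd j
          rw [h, this]
          rcases Nat.lt_or_ge (j.val + 1) n with hlt | hge
          · rw [Nat.mod_eq_of_lt hlt]; omega
          · have : j.val + 1 = n := by have := j.isLt; omega
            rw [this, Nat.mod_self]; omega
        · have := hadd i
          rw [h, this]
          rcases Nat.lt_or_ge (i.val + 1) n with hlt | hge
          · rw [Nat.mod_eq_of_lt hlt]; omega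
          · have : i.val + 1 = n := by have := i.isLt; omega
            rw [this, Nat.mod_self]; omega
      by_contra hcon
      dsimp only at hcon
      split at hcon <;> split at hcon <;> first | (exact hpar (by omega)) | exact hab hcon | exact hab hcon.symm
  · push_neg at hA
    obtain ⟨k, hk⟩ := hA
    have hnsub : ¬ (ℓ' (k+1) ⊆ ℓ' k) := fun hsub' =>
      hk (Finset.eq_of_subset_of_card_le hsub' (by rw [hcard, hcard]))
    obtain ⟨c, hc1, hc2⟩ := Finset.not_subset.mp hnsub
    set h : ℕ → ℕ := greedyC ℓ' k c with hh
    have hne : ∀ (i : Fin n) (x : ℕ), ((ℓ' i).erase x).Nonempty := by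
      intro i x
      rw [← Finset.card_pos]
      have := Finset.pred_card_le_card_erase (s := ℓ' i) (a := x)
      rw [hcard] at this; omega
    have hmem : ∀ p : ℕ, h p ∈ ℓ' (k + 1 + (p : Fin n)) := by
      intro p
      cases p with
      | zero => simpa [hh, greedyC] using hc1
      | succ p =>
        have : h (p+1) = pickC ((ℓ' (k+1+((p+1 : ℕ) : Fin n))).erase (h p)) := rfl
        rw [this]
        exact Finset.erase_subset _ _ (pickC_mem (hne _ _))
    have hstep : ∀ p : ℕ, h (p+1) ≠ h p := by
      intro p
      have : h (p+1) = pickC ((ℓ' (k+1+((p+1 : ℕ) : Fin n))).erase (h p)) := rfl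
      rw [this]
      exact Finset.ne_of_mem_erase (pickC_mem (hne _ _))
    set g : Fin n → ℕ := fun i => h ((i - (k+1)).val) with hg
    have hgmem : ∀ i, g i ∈ ℓ' i := by
      intro i
      have := hmem ((i - (k+1)).val)
      rwa [Fin.cast_val_eq_self, show k + 1 + (i - (k+1)) = i by abel] at this
    refine ⟨g, hgmem, ?_⟩
    have claim : ∀ u : Fin n, g u ≠ g (u + 1) := by
      intro u
      by_cases hu : u = k
      · subst hu
        have h1 : g (u + 1) = c := by
          rw [hg]; simp only [sub_self, Fin.val_zero]; rfl
        have h2 : g u ∈ ℓ' u := hgmem u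
        rw [h1]
        exact fun hcon => hc2 (hcon ▸ h2)
      · set p := ((u - (k+1)).val) with hp
        have hplt : p < n := (u - (k+1)).isLt
        have hpn : p + 1 < n := by
          rcases Nat.lt_or_ge (p+1) n with h' | h'
          · exact h'
          · exfalso
            have hpe : p + 1 = n := by omega
            have hz : (u - (k+1)) + 1 = 0 := by
              apply Fin.ext
              rw [hadd, ← hp, hpe, Nat.mod_self, Fin.val_zero]
            have : u - k = 0 := by
              rw [show u - k = u - (k+1) + 1 by abel, hz]
            exact hu (sub_eq_zero.mp this)
        have hval : ((u + 1 - (k+1)).val) = p + 1 := by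
          rw [show u + 1 - (k+1) = (u - (k+1)) + 1 by abel, hadd, ← hp,
            Nat.mod_eq_of_lt hpn]
        have : g (u + 1) = h (p + 1) := by rw [hg]; simp only [hval]
        rw [this]
        exact (hstep p).symm
    intro i j hadj
    rcases adjchar i j hadj with h' | h'
    · rw [h']; exact (claim j).symm
    · rw [h']; exact claim i

/-- Let `G` be a finite simple graph and `L` a list assignment with
`|L v| ≥ 4` for all `v`.  If `S` is a set of vertices all of degree exactly `4` in `G`
whose induced subgraph `G[S]` is a cycle of even length, and the induced subgraph of `G`
on the complement of `S` has a proper `L`-coloring, then `G` has a proper `L`-coloring. -/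
theorem extend_coloring_even_cycle {V : Type*} [Fintype V]
    (G : SimpleGraph V) [DecidableRel G.Adj]
    (L : V → Finset ℕ) (hL : ∀ v, 4 ≤ (L v).card)
    (S : Set V) (hdeg : ∀ v ∈ S, G.degree v = 4)
    (m : ℕ) (hm : 2 ≤ m)
    (hcyc : Nonempty (G.induce S ≃g cycleGraph (2 * m)))
    (hcol : ∃ f : ↥(Sᶜ) → ℕ, (∀ v : ↥(Sᶜ), f v ∈ L ↑v) ∧
      ∀ x y, (G.induce Sᶜ).Adj x y → f x ≠ f y) :
    ∃ f : V → ℕ, (∀ v, f v ∈ L v) ∧ ∀ x y, G.Adj x y → f x ≠ f y := by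
  classical
  obtain ⟨φ⟩ := hcyc
  obtain ⟨f0, hf0mem, hf0prop⟩ := hcol
  set n := 2 * m with hn
  haveI : NeZero n := ⟨by omega⟩
  have hn4 : 4 ≤ n := by omega
  have hone : ((1 : Fin n) : ℕ) = 1 := by rw [Fin.val_one']; exact Nat.mod_eq_of_lt (by omega)
  have hadd : ∀ x : Fin n, ((x + 1 : Fin n) : ℕ) = (x.val + 1) % n := by
    intro x; rw [Fin.val_add, hone]
  set w : Fin n → V := fun i => ↑(φ.symm i) with hw
  have hwS : ∀ i, w i ∈ S := fun i => (φ.symm i).2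
  set fc : V → ℕ := fun v => if h : v ∈ S then 0 else f0 ⟨v, h⟩ with hfc
  set out : V → Finset V := fun v => (G.neighborFinset v).filter (fun u => u ∉ S) with hout
  -- each vertex of S has at most two neighbors outside S
  have houtcard : ∀ v, ∀ hv : v ∈ S, (out v).card ≤ 2 := by
    intro v hv
    have h4 : (G.neighborFinset v).card = 4 := hdeg v hv
    set i : Fin n := φ ⟨v, hv⟩ with hi
    have hiadj : ∀ j : Fin n, (cycleGraph n).Adj i j → G.Adj v ↑(φ.symm j) ∧ ↑(φ.symm j) ∈ S := by
      intro j hj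
      have := φ.symm.map_adj_iff.mpr hj
      have he : φ.symm (φ ⟨v, hv⟩) = ⟨v, hv⟩ := by simp
      rw [hi, he] at this
      exact ⟨this, (φ.symm j).2⟩
    have hadj1 : (cycleGraph n).Adj i (i + 1) := by
      rw [cycleGraph_adj']
      right
      rw [show i + 1 - i = 1 by abel, hone]
    have hadj2 : (cycleGraph n).Adj i (i - 1) := by
      rw [cycleGraph_adj']
      left
      rw [show i - (i - 1) = 1 by abel, hone]
    have hne12 : (i + 1) ≠ (i - 1) := by
      intro hcon
      have h2 : (1 + 1 : Fin n) = 0 := by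
        have : i + (1 + 1) = i + 0 := by rw [add_zero, show i + (1+1) = (i + 1) + 1 by abel, hcon]; abel
        exact add_left_cancel this
      have := congrArg Fin.val h2
      rw [hadd 1, hone, Fin.val_zero, Nat.mod_eq_of_lt (by omega)] at this
      omega
    set a1 : V := ↑(φ.symm (i + 1)) with ha1
    set a2 : V := ↑(φ.symm (i - 1)) with ha2
    have hne : a1 ≠ a2 := by
      intro hcon
      exact hne12 (φ.symm.injective (Subtype.ext hcon))
    have hsubpair : ({a1, a2} : Finset V) ⊆ (G.neighborFinset v).filter (fun u => u ∈ S) := by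
      intro u hu
      rw [Finset.mem_insert, Finset.mem_singleton] at hu
      rcases hu with rfl | rfl
      · rw [Finset.mem_filter, SimpleGraph.mem_neighborFinset]
        exact hiadj _ hadj1
      · rw [Finset.mem_filter, SimpleGraph.mem_neighborFinset]
        exact hiadj _ hadj2
    have hin2 : 2 ≤ ((G.neighborFinset v).filter (fun u => u ∈ S)).card := by
      calc 2 = ({a1, a2} : Finset V).card := (Finset.card_pair hne).symm
        _ ≤ _ := Finset.card_le_card hsubpair
    have hpart := Finset.card_filter_add_card_filter_not
      (s := G.neighborFinset v) (p := fun u => u ∈ S)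
    rw [h4] at hpart
    rw [hout]
    dsimp only at hpart ⊢
    omega
  set L' : Fin n → Finset ℕ := fun i => (L (w i)) \ ((out (w i)).image fc) with hL'
  have hL'card : ∀ i, 2 ≤ (L' i).card := by
    intro i
    have h1 := Finset.le_card_sdiff ((out (w i)).image fc) (L (w i))
    have h2 := Finset.card_image_le (s := out (w i)) (f := fc)
    have h3 := houtcard (w i) (hwS i)
    have h4 := hL (w i)
    rw [hL']
    dsimp only
    omega
  obtain ⟨g, hgmem, hgprop⟩ := cycle_two_choosable hn4 ⟨m, hn⟩ L' hL'card
  refine ⟨fun v => if h : v ∈ S then g (φ ⟨v, h⟩) else f0 ⟨v, h⟩, ?_, ?_⟩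
  · intro v
    dsimp only
    by_cases h : v ∈ S
    · rw [dif_pos h]
      have := hgmem (φ ⟨v, h⟩)
      rw [hL'] at this
      dsimp only at this
      have hwv : w (φ ⟨v, h⟩) = v := by rw [hw]; simp
      rw [hwv] at this
      exact (Finset.mem_sdiff.mp this).1
    · rw [dif_neg h]; exact hf0mem ⟨v, h⟩
  · intro x y hxy
    dsimp only
    by_cases hx : x ∈ S <;> by_cases hy : y ∈ S
    · rw [dif_pos hx, dif_pos hy]
      exact hgprop _ _ (φ.map_adj_iff.mpr hxy)
    · -- x ∈ S, y ∉ S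
      rw [dif_pos hx, dif_neg hy]
      have hwv : w (φ ⟨x, hx⟩) = x := by rw [hw]; simp
      have hmem := hgmem (φ ⟨x, hx⟩)
      rw [hL'] at hmem; dsimp only at hmem; rw [hwv] at hmem
      have hyout : y ∈ out x := by
        rw [hout, Finset.mem_filter, SimpleGraph.mem_neighborFinset]
        exact ⟨hxy, hy⟩
      have : fc y ∈ (out x).image fc := Finset.mem_image_of_mem fc hyout
      have hfcy : fc y = f0 ⟨y, hy⟩ := by rw [hfc]; exact dif_neg hy
      intro hcon
      exact (Finset.mem_sdiff.mp hmem).2 (by rwa [hfcy, ← hcon] at this)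
    · -- x ∉ S, y ∈ S
      rw [dif_neg hx, dif_pos hy]
      have hwv : w (φ ⟨y, hy⟩) = y := by rw [hw]; simp
      have hmem := hgmem (φ ⟨y, hy⟩)
      rw [hL'] at hmem; dsimp only at hmem; rw [hwv] at hmem
      have hxout : x ∈ out y := by
        rw [hout, Finset.mem_filter, SimpleGraph.mem_neighborFinset]
        exact ⟨hxy.symm, hx⟩
      have : fc x ∈ (out y).image fc := Finset.mem_image_of_mem fc hxout
      have hfcx : fc x = f0 ⟨x, hx⟩ := by rw [hfc]; exact dif_neg hx
      intro hcon
      exact (Finset.mem_sdiff.mp hmem).2 (by rwa [hfcx, hcon] at this)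
    · rw [dif_neg hx, dif_neg hy]
      exact hf0prop ⟨x, hx⟩ ⟨y, hy⟩ hxy
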